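/- Let $n\in\mathbb{N}$ and $1\le p,q,r\le\infty$. Then the unit ball $B_\pi^n$ of the projective tensor product $\ell_p^n\otimes_\pi\ell_q^n\otimes_\pi\ell_r^n$ (a convex body in $\mathbb{R}^{n^3}$) satisfies $\mathrm{vol}_{n^3}(B_\pi^n)^{1/n^3} \ge n^{-\min(1/p,1/2)-\min(1/q,1/2)-1/r-1}$. -/

import Mathlib

open Finset
open scoped ENNReal NNReal

/-- The `ℓ_p` norm on `ℝ^n` for an extended real exponent `p`
(with `pnorm ∞ x = max_i |x i|`). -/
noncomputable def pnorm (p : ℝ≥0∞) {n : ℕ} (x : Fin n → ℝ) : ℝ :=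
  if p = ∞ then ⨆ i, |x i| else (∑ i, |x i| ^ p.toReal) ^ (1 / p.toReal)

open MeasureTheory

/-- The projective tensor norm on `ℝ^n ⊗ ℝ^n ⊗ ℝ^n ≅ ℝ^{n³}` induced by
`ℓ_p^n, ℓ_q^n, ℓ_r^n`. -/
noncomputable def projNorm3 (p q r : ℝ≥0∞) {n : ℕ} (A : Fin n → Fin n → Fin n → ℝ) : ℝ :=
  sInf {t : ℝ | ∃ (m : ℕ) (x y z : Fin m → Fin n → ℝ),
    (∀ i j k, A i j k = ∑ s, x s i * y s j * z s k) ∧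
    t = ∑ s, pnorm p (x s) * pnorm q (y s) * pnorm r (z s)}


namespace PTN

/-- sign vector attached to a boolean vector -/
def sg {n : ℕ} (b : Fin n → Bool) (i : Fin n) : ℝ := if b i then 1 else -1

def intS {n : ℕ} (b : Fin n → Bool) : ℤ := ∑ i, (if b i then 1 else -1)

noncomputable def usum (n : ℕ) : ℕ := ∑ b : Fin n → Bool, (intS b).natAbs

noncomputable def zcount (n : ℕ) : ℕ :=
  (Finset.univ.filter (fun b : Fin n → Bool => intS b = 0)).card

lemma intS_cons {n : ℕ} (x : Bool) (c : Fin n → Bool) :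
    intS (Fin.cons x c) = (if x then 1 else -1) + intS c := by
  unfold intS
  rw [Fin.sum_univ_succ]
  simp

lemma usum_succ (n : ℕ) : usum (n+1) = 2 * usum n + 2 * zcount n := by
  classical
  unfold usum
  rw [← Equiv.sum_comp (Fin.consEquiv (fun _ : Fin (n+1) => Bool))
      (fun b => (intS b).natAbs)]
  rw [Fintype.sum_prod_type]
  rw [Finset.sum_comm]
  have key : ∀ c : Fin n → Bool,
      ∑ x : Bool, (intS ((Fin.consEquiv (fun _ : Fin (n+1) => Bool)) (x, c))).natAbs
        = 2 * (intS c).natAbs + (if intS c = 0 then 2 else 0) := by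
    intro c
    rw [Fintype.sum_bool]
    show (intS (Fin.cons true c)).natAbs + (intS (Fin.cons false c)).natAbs = _
    rw [intS_cons, intS_cons]
    rcases eq_or_ne (intS c) 0 with h | h <;> simp [h] <;> omega
  rw [Finset.sum_congr rfl (fun c _ => key c)]
  rw [Finset.sum_add_distrib, ← Finset.mul_sum]
  unfold zcount
  rw [Finset.sum_ite, Finset.sum_const, Finset.sum_const_zero]
  simp [mul_comm]

lemma count_weight (n k : ℕ) :
    (Finset.univ.filter
      (fun b : Fin n → Bool => (Finset.univ.filter (fun i => b i)).card = k)).card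
      = Nat.choose n k := by
  classical
  rw [← Fintype.card_subtype]
  have e : {b : Fin n → Bool // (Finset.univ.filter (fun i => b i)).card = k}
      ≃ {s : Finset (Fin n) // s.card = k} :=
    { toFun := fun b => ⟨Finset.univ.filter (fun i => b.1 i), b.2⟩
      invFun := fun s => ⟨fun i => i ∈ s.1, by simp [s.2]⟩
      left_inv := by intro b; ext i; simp
      right_inv := by intro s; ext i; simp }
  rw [Fintype.card_congr e, Fintype.card_finset_len, Fintype.card_fin]

lemma intS_eq {n : ℕ} (b : Fin n → Bool) :
    intS b = 2 * ((Finset.univ.filter (fun i => b i)).card : ℤ) - n := by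
  classical
  unfold intS
  rw [Finset.sum_ite, Finset.sum_const, Finset.sum_const]
  have := Finset.card_filter_add_card_filter_not
    (s := (Finset.univ : Finset (Fin n))) (p := fun i => b i = true)
  simp only [Finset.card_univ, Fintype.card_fin] at this
  have h2 : (Finset.univ.filter (fun i => ¬ (b i = true))).card
      = n - (Finset.univ.filter (fun i => b i = true)).card := by omega
  have h3 : (Finset.univ.filter (fun i => b i = true)).card ≤ n := by omega
  simp only [nsmul_eq_mul, mul_one, mul_neg]
  push_cast [h2, h3]
  ring

lemma zcount_eq (n : ℕ) :
    zcount n = if Even n then Nat.choose n (n/2) else 0 := by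
  classical
  unfold zcount
  rcases Nat.even_or_odd n with he | ho
  · rw [if_pos he]
    rw [← count_weight n (n/2)]
    congr 1
    apply Finset.filter_congr
    intro b _
    rw [intS_eq]
    obtain ⟨m, hm⟩ := he
    subst hm
    constructor
    · intro h; omega
    · intro h; omega
  · rw [if_neg (Nat.not_even_iff_odd.mpr ho)]
    rw [Finset.card_eq_zero, Finset.filter_eq_empty_iff]
    intro b _
    rw [intS_eq]
    obtain ⟨m, hm⟩ := ho
    subst hm
    intro h
    omega

lemma usum_zero : usum 0 = 0 := by
  unfold usum intS
  simp

lemma usum_closed : ∀ k : ℕ,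
    usum (2*k) = 2*k * Nat.centralBinom k ∧
    usum (2*k+1) = 2*(2*k+1) * Nat.centralBinom k := by
  intro k
  induction k with
  | zero =>
    constructor
    · simpa using usum_zero
    · have h := usum_succ 0
      rw [usum_zero, zcount_eq] at h
      simpa [Nat.centralBinom] using h
  | succ k ih =>
    obtain ⟨ihe, iho⟩ := ih
    have cb := Nat.succ_mul_centralBinom_succ k
    have he2 : 2*(k+1) = (2*k+1)+1 := by ring
    have h1 : usum (2*(k+1)) = 2 * usum (2*k+1) + 2 * zcount (2*k+1) := by
      rw [he2]; exact usum_succ _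
    have hz1 : zcount (2*k+1) = 0 := by
      rw [zcount_eq, if_neg]
      simp [Nat.even_add_one, Nat.even_mul]
    have heven : usum (2*(k+1)) = 2*(k+1) * Nat.centralBinom (k+1) := by
      rw [h1, hz1, iho]
      have : 2 * (2 * (2 * k + 1) * k.centralBinom) + 2*0
          = 2 * ((k + 1) * (k+1).centralBinom) := by rw [← cb]; ring
      rw [this]; ring
    refine ⟨heven, ?_⟩
    have h2 : usum (2*(k+1)+1) = 2 * usum (2*(k+1)) + 2 * zcount (2*(k+1)) := usum_succ _
    have hz2 : zcount (2*(k+1)) = Nat.centralBinom (k+1) := by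
      rw [zcount_eq, if_pos ⟨k+1, by ring⟩]
      have : 2*(k+1)/2 = k+1 := by omega
      rw [this, Nat.centralBinom]
    rw [h2, hz2, heven]
    ring

lemma centralBinom_sqrt_lb : ∀ k : ℕ, 1 ≤ k →
    (4:ℝ)^k ≤ 2 * Real.sqrt k * Nat.centralBinom k := by
  intro k
  induction k with
  | zero => omega
  | succ k ih =>
    intro _
    rcases Nat.eq_or_lt_of_le (Nat.one_le_iff_ne_zero.mpr (Nat.succ_ne_zero k)) with h1 | h1
    · -- k+1 = 1
      have hk : k = 0 := by omega
      subst hk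
      norm_num [Nat.centralBinom]
    · have hk1 : 1 ≤ k := by omega
      have IH := ih hk1
      have cb := Nat.succ_mul_centralBinom_succ k
      have cbR : ((k:ℝ)+1) * Nat.centralBinom (k+1) = 2*(2*k+1) * Nat.centralBinom k := by
        exact_mod_cast congrArg (fun m : ℕ => (m:ℝ)) cb
      have hsk : (0:ℝ) ≤ (k:ℝ) := by positivity
      have hs1 : Real.sqrt k ≤ Real.sqrt (k+1) := by
        apply Real.sqrt_le_sqrt; linarith
      -- key : 2*sqrt k*(k+1) ≤ sqrt (k+1) * (2k+1)
      have hkey : 2 * Real.sqrt k * ((k:ℝ)+1) ≤ Real.sqrt ((k:ℝ)+1) * (2*(k:ℝ)+1) := by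
        have hsq : Real.sqrt k ^ 2 = (k:ℝ) := Real.sq_sqrt hsk
        have hsq1 : Real.sqrt ((k:ℝ)+1) ^ 2 = (k:ℝ)+1 := Real.sq_sqrt (by linarith)
        nlinarith [Real.sqrt_nonneg (k:ℝ), Real.sqrt_nonneg ((k:ℝ)+1),
          sq_nonneg (Real.sqrt ((k:ℝ)+1) - Real.sqrt k)]
      -- conclude
      have hCpos : (0:ℝ) < Nat.centralBinom k := by
        exact_mod_cast Nat.centralBinom_pos k
      have step : (4:ℝ)^(k+1) = 4 * (4:ℝ)^k := by ring
      rw [step]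
      have h4 : 4 * (4:ℝ)^k ≤ 4 * (2 * Real.sqrt k * Nat.centralBinom k) := by linarith
      refine le_trans h4 ?_
      -- 8 sqrt k * C_k ≤ 2 sqrt(k+1) C_{k+1}
      -- C_{k+1} = 2(2k+1) C_k/(k+1)
      have hkpos : (0:ℝ) < (k:ℝ)+1 := by linarith
      push_cast
      have hmul := mul_le_mul_of_nonneg_right hkey (le_of_lt hCpos)
      have hfin : (4 * (2 * Real.sqrt k * (Nat.centralBinom k : ℝ))) * ((k:ℝ)+1)
          ≤ (2 * Real.sqrt ((k:ℝ)+1) * (Nat.centralBinom (k+1) : ℝ)) * ((k:ℝ)+1) := by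
        nlinarith [Real.sqrt_nonneg ((k:ℝ)+1)]
      have := le_of_mul_le_mul_right hfin hkpos
      linarith

lemma flat_lb (n : ℕ) (hn : 1 ≤ n) :
    (2:ℝ)^n * Real.sqrt ((n:ℝ)/2) ≤ (usum n : ℝ) := by
  have husum_nonneg : (0:ℝ) ≤ (usum n : ℝ) := by positivity
  have hrw : (2:ℝ)^n * Real.sqrt ((n:ℝ)/2) = Real.sqrt ((4:ℝ)^n * ((n:ℝ)/2)) := by
    rw [Real.sqrt_mul (by positivity)]
    congr 1
    rw [show (4:ℝ)^n = ((2:ℝ)^n)^2 by rw [← pow_mul, mul_comm, pow_mul]; norm_num]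
    exact (Real.sqrt_sq (by positivity)).symm
  rw [hrw]
  rw [show (usum n : ℝ) = Real.sqrt (((usum n : ℝ))^2) from (Real.sqrt_sq husum_nonneg).symm]
  apply Real.sqrt_le_sqrt
  -- now square inequality
  rcases Nat.even_or_odd n with ⟨k, hk⟩ | ⟨k, hk⟩
  · -- n = 2k, k ≥ 1
    have hk1 : 1 ≤ k := by omega
    have hu : usum n = 2*k * Nat.centralBinom k := by
      rw [hk, show k + k = 2*k by ring]; exact (usum_closed k).1
    have hcb := centralBinom_sqrt_lb k hk1
    have hsq : (16:ℝ)^k ≤ 4*k*(Nat.centralBinom k:ℝ)^2 := by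
      have h0 : (0:ℝ) ≤ (4:ℝ)^k := by positivity
      have := mul_self_le_mul_self h0 hcb
      have hss : Real.sqrt k * Real.sqrt k = (k:ℝ) := Real.mul_self_sqrt (by positivity)
      have h16 : (16:ℝ)^k = 4^k * 4^k := by rw [← mul_pow]; norm_num
      nlinarith
    have h4n : (4:ℝ)^n = (16:ℝ)^k := by
      rw [hk, show k + k = 2*k by ring, pow_mul]; norm_num
    have hn2 : ((n:ℝ))/2 = (k:ℝ) := by rw [hk]; push_cast; ring
    rw [h4n, hn2, hu]
    push_cast
    nlinarith [Nat.centralBinom_pos k, sq_nonneg ((Nat.centralBinom k : ℝ))]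
  · -- n = 2k+1
    rcases Nat.eq_zero_or_pos k with hk0 | hk1
    · subst hk0
      have hn1 : n = 1 := by omega
      subst hn1
      have hu : usum 1 = 2 := by
        have := (usum_closed 0).2
        simpa [Nat.centralBinom] using this
      rw [hu]
      norm_num
    · have hu : usum n = 2*(2*k+1) * Nat.centralBinom k := by
        rw [hk]; exact (usum_closed k).2
      have hcb := centralBinom_sqrt_lb k hk1
      have hsq : (16:ℝ)^k ≤ 4*k*(Nat.centralBinom k:ℝ)^2 := by
        have h0 : (0:ℝ) ≤ (4:ℝ)^k := by positivity
        have := mul_self_le_mul_self h0 hcb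
        have hss : Real.sqrt k * Real.sqrt k = (k:ℝ) := Real.mul_self_sqrt (by positivity)
        have h16 : (16:ℝ)^k = 4^k * 4^k := by rw [← mul_pow]; norm_num
        nlinarith
      have h4n : (4:ℝ)^n = 4*(16:ℝ)^k := by
        rw [hk, pow_succ, pow_mul]; norm_num; ring
      have hnR : ((n:ℝ)) = 2*(k:ℝ)+1 := by rw [hk]; push_cast; ring
      rw [h4n, hu]
      push_cast
      rw [hnR]
      have hkR : (1:ℝ) ≤ (k:ℝ) := by exact_mod_cast hk1
      -- goal: 4*16^k*((2k+1)/2) ≤ (2(2k+1)C)^2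
      -- i.e. 2*16^k*(2k+1) ≤ 4(2k+1)^2 C^2 ; use 16^k ≤ 4k C^2 and (2k+1) ≥ 2k
      nlinarith [Nat.centralBinom_pos k, sq_nonneg ((Nat.centralBinom k : ℝ)),
        mul_le_mul_of_nonneg_left hsq (by positivity : (0:ℝ) ≤ 2*(k:ℝ)+1)]

noncomputable def Lsum {n : ℕ} (a : Fin n → ℝ) : ℝ :=
  ∑ b : Fin n → Bool, |∑ i, a i * sg b i|

lemma Lsum_nonneg {n : ℕ} (a : Fin n → ℝ) : 0 ≤ Lsum a :=
  Finset.sum_nonneg (fun _ _ => abs_nonneg _)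

lemma Lsum_comp_equiv {n : ℕ} (a : Fin n → ℝ) (σ : Equiv.Perm (Fin n)) :
    Lsum (a ∘ σ) = Lsum a := by
  unfold Lsum
  have hinner : ∀ b : Fin n → Bool,
      ∑ i, (a ∘ σ) i * sg b i = ∑ j, a j * sg (b ∘ σ.symm) j := by
    intro b
    rw [← Equiv.sum_comp σ (fun j => a j * sg (b ∘ σ.symm) j)]
    apply Finset.sum_congr rfl
    intro i _
    simp [sg, Function.comp]
  rw [Finset.sum_congr rfl (fun b _ => by rw [hinner b])]
  exact Equiv.sum_comp (Equiv.arrowCongr σ (Equiv.refl Bool))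
    (fun b => |∑ j, a j * sg b j|)

lemma sum_sg_eq_intS {n : ℕ} (b : Fin n → Bool) :
    ∑ i, sg b i = ((intS b : ℤ) : ℝ) := by
  unfold sg intS
  push_cast
  rfl

lemma Lsum_flatten {n : ℕ} (hn : 1 ≤ n) (a : Fin n → ℝ) (ha : ∀ i, 0 ≤ a i) :
    (∑ i, a i) * (usum n : ℝ) ≤ (n:ℝ) * Lsum a := by
  haveI : NeZero n := ⟨by omega⟩
  have hshift : ∀ c : Fin n, Lsum a = Lsum (a ∘ (Equiv.addRight c)) :=
    fun c => (Lsum_comp_equiv a (Equiv.addRight c)).symm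
  have h1 : (n:ℝ) * Lsum a = ∑ c : Fin n, Lsum (a ∘ (Equiv.addRight c)) := by
    rw [Finset.sum_congr rfl (fun c _ => (hshift c).symm), Finset.sum_const]
    simp [mul_comm]
  rw [h1]
  unfold Lsum
  rw [Finset.sum_comm]
  have h2 : ∀ b : Fin n → Bool,
      (∑ i, a i) * |((intS b : ℤ):ℝ)|
        ≤ ∑ c : Fin n, |∑ i, (a ∘ (Equiv.addRight c)) i * sg b i| := by
    intro b
    have htri : |∑ c : Fin n, ∑ i, (a ∘ (Equiv.addRight c)) i * sg b i|
        ≤ ∑ c : Fin n, |∑ i, (a ∘ (Equiv.addRight c)) i * sg b i| :=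
      Finset.abs_sum_le_sum_abs _ _
    have heq : ∑ c : Fin n, ∑ i, (a ∘ (Equiv.addRight c)) i * sg b i
        = (∑ j, a j) * ((intS b : ℤ):ℝ) := by
      rw [Finset.sum_comm]
      have : ∀ i : Fin n, ∑ c : Fin n, (a ∘ (Equiv.addRight c)) i * sg b i
          = (∑ j, a j) * sg b i := by
        intro i
        rw [← Finset.sum_mul]
        congr 1
        have := Equiv.sum_comp (Equiv.addLeft i) a
        simpa [Function.comp, add_comm] using this
      rw [Finset.sum_congr rfl (fun i _ => this i), ← Finset.mul_sum, sum_sg_eq_intS]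
    have hpos : 0 ≤ ∑ j, a j := Finset.sum_nonneg (fun j _ => ha j)
    calc (∑ i, a i) * |((intS b : ℤ):ℝ)| = |(∑ j, a j) * ((intS b : ℤ):ℝ)| := by
          rw [abs_mul, abs_of_nonneg hpos]
      _ = |∑ c : Fin n, ∑ i, (a ∘ (Equiv.addRight c)) i * sg b i| := by rw [heq]
      _ ≤ _ := htri
  calc (∑ i, a i) * (usum n : ℝ)
      = ∑ b : Fin n → Bool, (∑ i, a i) * |((intS b : ℤ):ℝ)| := by
        unfold usum
        push_cast [Nat.cast_natAbs]
        rw [Finset.mul_sum]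
    _ ≤ _ := Finset.sum_le_sum (fun b _ => h2 b)

lemma Lsum_abs {n : ℕ} (a : Fin n → ℝ) : Lsum (fun i => |a i|) = Lsum a := by
  classical
  unfold Lsum
  have e : Function.Involutive
      (fun (b : Fin n → Bool) => (fun i => if a i < 0 then !(b i) else b i)) := by
    intro b
    funext i
    by_cases h : a i < 0 <;> simp [h]
  have hterm : ∀ b : Fin n → Bool,
      |∑ i, |a i| * sg b i| = |∑ i, a i * sg (e.toPerm _ b) i| := by
    intro b
    congr 1
    apply Finset.sum_congr rfl
    intro i _
    show |a i| * sg b i = a i * sg (fun i => if a i < 0 then !(b i) else b i) i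
    by_cases h : a i < 0
    · simp only [sg, h, if_true]
      rcases Bool.eq_false_or_eq_true (b i) with hb | hb <;>
        simp [hb, abs_of_neg h] <;> ring
    · simp only [sg, h, if_false]
      rw [abs_of_nonneg (le_of_not_gt h)]
  rw [Finset.sum_congr rfl (fun b _ => hterm b)]
  exact Equiv.sum_comp (e.toPerm _) (fun b => |∑ i, a i * sg b i|)

lemma K1 {n : ℕ} (hn : 1 ≤ n) (a : Fin n → ℝ) :
    (2:ℝ)^n * ∑ i, |a i| ≤ Real.sqrt (2*n) * Lsum a := by
  have h1 := Lsum_flatten hn (fun i => |a i|) (fun i => abs_nonneg _)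
  rw [Lsum_abs] at h1
  have h2 := flat_lb n hn
  have hsum_nonneg : 0 ≤ ∑ i, |a i| := Finset.sum_nonneg (fun _ _ => abs_nonneg _)
  have h3 : (∑ i, |a i|) * ((2:ℝ)^n * Real.sqrt ((n:ℝ)/2))
      ≤ (∑ i, |a i|) * (usum n : ℝ) := by
    apply mul_le_mul_of_nonneg_left h2 hsum_nonneg
  have h4 : (∑ i, |a i|) * ((2:ℝ)^n * Real.sqrt ((n:ℝ)/2)) ≤ (n:ℝ) * Lsum a :=
    le_trans h3 h1
  -- multiply by sqrt(2n)/n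
  have hnpos : (0:ℝ) < n := by exact_mod_cast hn
  have hkey : Real.sqrt (2*n) * Real.sqrt ((n:ℝ)/2) = (n:ℝ) := by
    rw [← Real.sqrt_mul (by positivity)]
    rw [show (2*(n:ℝ)) * ((n:ℝ)/2) = (n:ℝ)^2 by ring]
    exact Real.sqrt_sq (le_of_lt hnpos)
  have h5 := mul_le_mul_of_nonneg_left h4 (Real.sqrt_nonneg (2*(n:ℝ)))
  rw [show Real.sqrt (2*(n:ℝ)) * ((∑ i, |a i|) * ((2:ℝ)^n * Real.sqrt ((n:ℝ)/2)))
      = (Real.sqrt (2*(n:ℝ)) * Real.sqrt ((n:ℝ)/2)) * ((2:ℝ)^n * (∑ i, |a i|)) by ring,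
    hkey] at h5
  have h6 : (n:ℝ) * ((2:ℝ) ^ n * ∑ i, |a i|) ≤ (n:ℝ) * (Real.sqrt (2 * ↑n) * Lsum a) := by
    calc (n:ℝ) * ((2:ℝ) ^ n * ∑ i, |a i|) ≤ Real.sqrt (2*(n:ℝ)) * ((n:ℝ) * Lsum a) := h5
      _ = (n:ℝ) * (Real.sqrt (2 * ↑n) * Lsum a) := by ring
  exact le_of_mul_le_mul_left h6 hnpos

open scoped ENNReal NNReal

section pnormfacts

variable {p : ℝ≥0∞} {n : ℕ}

lemma toReal_pos (hp : 1 ≤ p) (hptop : p ≠ ∞) : 0 < p.toReal := by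
  have h1 : (1:ℝ≥0∞).toReal ≤ p.toReal := ENNReal.toReal_mono hptop hp
  simpa using lt_of_lt_of_le (by norm_num) h1

lemma inv_toReal_eq (hptop : p ≠ ∞) : ((1:ℝ≥0∞)/p).toReal = (p.toReal)⁻¹ := by
  rw [one_div, ENNReal.toReal_inv]

lemma pnorm_nonneg (x : Fin n → ℝ) : 0 ≤ pnorm p x := by
  unfold pnorm
  split
  · exact Real.iSup_nonneg (fun i => abs_nonneg _)
  · positivity

/-- pnorm of a vector with constant absolute value `c`. -/
lemma pnorm_const_abs (hn : 1 ≤ n) (hp : 1 ≤ p) {x : Fin n → ℝ} {c : ℝ} (hc : 0 ≤ c)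
    (hx : ∀ i, |x i| = c) : pnorm p x = c * (n:ℝ) ^ (((1:ℝ≥0∞)/p).toReal) := by
  haveI : NeZero n := ⟨by omega⟩
  haveI : Nonempty (Fin n) := ⟨⟨0, by omega⟩⟩
  unfold pnorm
  rcases eq_or_ne p ∞ with h | h
  · rw [if_pos h, h]
    have h0 : ((1:ℝ≥0∞)/∞).toReal = 0 := by simp
    rw [h0, Real.rpow_zero, mul_one]
    have : ∀ i : Fin n, |x i| = c := hx
    calc (⨆ i, |x i|) = ⨆ _ : Fin n, c := by
          congr 1; funext i; exact hx i
      _ = c := ciSup_const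
  · rw [if_neg h, inv_toReal_eq h]
    set t := p.toReal with ht
    have htpos : 0 < t := toReal_pos hp h
    have hsum : ∑ i, |x i| ^ t = (n:ℝ) * c ^ t := by
      rw [Finset.sum_congr rfl (fun i _ => by rw [hx i])]
      rw [Finset.sum_const]
      simp [mul_comm]
    rw [hsum, one_div]
    rw [Real.mul_rpow (by positivity) (by positivity)]
    rw [← Real.rpow_mul hc, mul_inv_cancel₀ (ne_of_gt htpos), Real.rpow_one]
    ring

lemma pnorm_single (hn : 1 ≤ n) (hp : 1 ≤ p) (i0 : Fin n) {c : ℝ} (hc : 0 ≤ c) :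
    pnorm p (fun j => if j = i0 then c else 0) = c := by
  haveI : Nonempty (Fin n) := ⟨⟨0, by omega⟩⟩
  unfold pnorm
  rcases eq_or_ne p ∞ with h | h
  · rw [if_pos h]
    apply le_antisymm
    · apply ciSup_le
      intro j
      by_cases hj : j = i0 <;> simp [hj, abs_of_nonneg hc, hc]
    · have hle := le_ciSup (f := fun j => |if j = i0 then c else 0|)
        (Set.Finite.bddAbove (Set.finite_range _)) i0
      simpa [abs_of_nonneg hc] using hle
  · rw [if_neg h]
    set t := p.toReal with ht
    have htpos : 0 < t := toReal_pos hp h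
    have hsum : ∑ j, |if j = i0 then c else 0| ^ t = c ^ t := by
      rw [Finset.sum_congr rfl
        (fun j _ => show |if j = i0 then c else 0| ^ t = if j = i0 then c ^ t else 0 by
          by_cases hj : j = i0
          · rw [if_pos hj, if_pos hj, abs_of_nonneg hc]
          · rw [if_neg hj, if_neg hj, abs_zero, Real.zero_rpow (ne_of_gt htpos)])]
      simp
    rw [hsum, one_div, ← Real.rpow_mul hc, mul_inv_cancel₀ (ne_of_gt htpos), Real.rpow_one]

end pnormfacts

section dualcore

variable {n : ℕ}

lemma exists_sign_sum (c : Fin n → ℝ) :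
    ∃ b : Fin n → Bool, ∑ k, sg b k * c k = ∑ k, |c k| := by
  refine ⟨fun k => decide (0 ≤ c k), Finset.sum_congr rfl (fun k _ => ?_)⟩
  by_cases h : 0 ≤ c k
  · simp [sg, h, abs_of_nonneg h]
  · simp [sg, h, abs_of_neg (lt_of_not_ge h)]

lemma sum_abs_le_of_signs {v : ℝ} {c : Fin n → ℝ}
    (H : ∀ b : Fin n → Bool, ∑ k, sg b k * c k ≤ v) : ∑ k, |c k| ≤ v := by
  obtain ⟨b, hb⟩ := exists_sign_sum c
  rw [← hb]; exact H b

/-- Case with two exact (basis) slots: trivial ℓ¹ bound. -/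
lemma caseA_bound {v : ℝ} (B : Fin n → Fin n → Fin n → ℝ)
    (H : ∀ (i0 j0 : Fin n) (b : Fin n → Bool), ∑ k, sg b k * B i0 j0 k ≤ v) :
    ∑ i, ∑ j, ∑ k, |B i j k| ≤ (n:ℝ)^2 * v := by
  have h1 : ∀ i0 j0, ∑ k, |B i0 j0 k| ≤ v :=
    fun i0 j0 => sum_abs_le_of_signs (H i0 j0)
  calc ∑ i, ∑ j, ∑ k, |B i j k| ≤ ∑ _i : Fin n, ∑ _j : Fin n, v := by
        apply Finset.sum_le_sum; intro i _
        apply Finset.sum_le_sum; intro j _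
        exact h1 i j
    _ = (n:ℝ)^2 * v := by
        rw [Finset.sum_const, Finset.sum_const]
        simp [Finset.card_univ]
        ring

/-- Case with one sign-averaged slot (Khintchine once). -/
lemma slice_bound (hn : 1 ≤ n) {v : ℝ} (M : Fin n → Fin n → ℝ)
    (H : ∀ (b b' : Fin n → Bool), ∑ j, ∑ k, (sg b j * sg b' k) * M j k ≤ v) :
    ∑ j, ∑ k, |M j k| ≤ Real.sqrt (2*n) * v := by
  -- for each b, pick optimal signs in k
  have h1 : ∀ b : Fin n → Bool, ∑ k, |∑ j, sg b j * M j k| ≤ v := by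
    intro b
    apply sum_abs_le_of_signs
    intro b'
    have := H b b'
    calc ∑ k, sg b' k * ∑ j, sg b j * M j k
        = ∑ j, ∑ k, (sg b j * sg b' k) * M j k := by
          rw [Finset.sum_comm]
          apply Finset.sum_congr rfl; intro k _
          rw [Finset.mul_sum]
          apply Finset.sum_congr rfl; intro j _
          ring
      _ ≤ v := this
  -- sum over b
  have h2 : ∑ b : Fin n → Bool, ∑ k, |∑ j, sg b j * M j k| ≤ (2:ℝ)^n * v := by
    calc ∑ b : Fin n → Bool, ∑ k, |∑ j, sg b j * M j k|
        ≤ ∑ _b : Fin n → Bool, v := Finset.sum_le_sum (fun b _ => h1 b)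
      _ = (2:ℝ)^n * v := by
          rw [Finset.sum_const]
          simp [Finset.card_univ]
  -- Khintchine in j, for each k
  have h3 : ∀ k, (2:ℝ)^n * ∑ j, |M j k| ≤ Real.sqrt (2*n) * Lsum (fun j => M j k) :=
    fun k => K1 hn _
  have h4 : ∑ k, Lsum (fun j => M j k) = ∑ b : Fin n → Bool, ∑ k, |∑ j, sg b j * M j k| := by
    rw [Finset.sum_comm]
    unfold Lsum
    apply Finset.sum_congr rfl; intro k _
    apply Finset.sum_congr rfl; intro b _
    congr 1
    exact Finset.sum_congr rfl (fun j _ => mul_comm _ _)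
  have h5 : (2:ℝ)^n * (∑ j, ∑ k, |M j k|) ≤ (2:ℝ)^n * (Real.sqrt (2*n) * v) := by
    calc (2:ℝ)^n * (∑ j, ∑ k, |M j k|)
        = ∑ k, (2:ℝ)^n * ∑ j, |M j k| := by
          rw [← Finset.mul_sum, Finset.sum_comm]
      _ ≤ ∑ k, Real.sqrt (2*n) * Lsum (fun j => M j k) :=
          Finset.sum_le_sum (fun k _ => h3 k)
      _ = Real.sqrt (2*n) * ∑ k, Lsum (fun j => M j k) := by rw [Finset.mul_sum]
      _ = Real.sqrt (2*n) * ∑ b : Fin n → Bool, ∑ k, |∑ j, sg b j * M j k| := by rw [h4]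
      _ ≤ Real.sqrt (2*n) * ((2:ℝ)^n * v) := by
          apply mul_le_mul_of_nonneg_left h2 (Real.sqrt_nonneg _)
      _ = (2:ℝ)^n * (Real.sqrt (2*n) * v) := by ring
  exact le_of_mul_le_mul_left h5 (by positivity)

/-- Case with two sign-averaged slots (Khintchine twice). -/
lemma cube_bound (hn : 1 ≤ n) {v : ℝ} (T : Fin n → Fin n → Fin n → ℝ)
    (H : ∀ (b b' b'' : Fin n → Bool),
      ∑ i, ∑ j, ∑ k, (sg b'' i * sg b' j * sg b k) * T i j k ≤ v) :
    ∑ i, ∑ j, ∑ k, |T i j k| ≤ 2 * n * v := by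
  -- step 0: optimal signs in i for each (b,b')
  have h1 : ∀ (b b' : Fin n → Bool),
      ∑ i, |∑ j, sg b' j * (∑ k, sg b k * T i j k)| ≤ v := by
    intro b b'
    apply sum_abs_le_of_signs
    intro b''
    have := H b b' b''
    calc ∑ i, sg b'' i * ∑ j, sg b' j * (∑ k, sg b k * T i j k)
        = ∑ i, ∑ j, ∑ k, (sg b'' i * sg b' j * sg b k) * T i j k := by
          apply Finset.sum_congr rfl; intro i _
          rw [Finset.mul_sum]
          apply Finset.sum_congr rfl; intro j _
          rw [Finset.mul_sum, Finset.mul_sum]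
          apply Finset.sum_congr rfl; intro k _
          ring
      _ ≤ v := this
  have h2 : ∑ b : Fin n → Bool, ∑ b' : Fin n → Bool,
      ∑ i, |∑ j, sg b' j * (∑ k, sg b k * T i j k)| ≤ (4:ℝ)^n * v := by
    calc ∑ b : Fin n → Bool, ∑ b' : Fin n → Bool,
        ∑ i, |∑ j, sg b' j * (∑ k, sg b k * T i j k)|
        ≤ ∑ _b : Fin n → Bool, ∑ _b' : Fin n → Bool, v := by
          apply Finset.sum_le_sum; intro b _
          exact Finset.sum_le_sum (fun b' _ => h1 b b')
      _ = (4:ℝ)^n * v := by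
          rw [Finset.sum_const, Finset.sum_const]
          simp [Finset.card_univ]
          rw [show (4:ℝ) = 2*2 by norm_num, mul_pow]
          ring
  -- fix i; two Khintchine steps
  have hkey : ∀ i, (4:ℝ)^n * (∑ j, ∑ k, |T i j k|)
      ≤ (2*n) * ∑ b : Fin n → Bool, ∑ b' : Fin n → Bool,
          |∑ j, sg b' j * (∑ k, sg b k * T i j k)| := by
    intro i
    -- inner Khintchine (over k), for each j
    have hk1 : ∀ j, (2:ℝ)^n * ∑ k, |T i j k| ≤ Real.sqrt (2*n) * Lsum (fun k => T i j k) :=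
      fun j => K1 hn _
    have e1 : ∑ j, Lsum (fun k => T i j k)
        = ∑ b : Fin n → Bool, ∑ j, |∑ k, sg b k * T i j k| := by
      rw [Finset.sum_comm]
      unfold Lsum
      apply Finset.sum_congr rfl; intro j _
      apply Finset.sum_congr rfl; intro b _
      congr 1
      exact Finset.sum_congr rfl (fun k _ => mul_comm _ _)
    -- outer Khintchine (over j), for each b
    have hk2 : ∀ b : Fin n → Bool, (2:ℝ)^n * ∑ j, |∑ k, sg b k * T i j k|
        ≤ Real.sqrt (2*n) * Lsum (fun j => ∑ k, sg b k * T i j k) :=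
      fun b => K1 hn _
    have e2 : ∀ b : Fin n → Bool, Lsum (fun j => ∑ k, sg b k * T i j k)
        = ∑ b' : Fin n → Bool, |∑ j, sg b' j * (∑ k, sg b k * T i j k)| := by
      intro b
      unfold Lsum
      apply Finset.sum_congr rfl; intro b' _
      congr 1
      exact Finset.sum_congr rfl (fun j _ => mul_comm _ _)
    have hs : Real.sqrt (2*n) * Real.sqrt (2*n) = 2*n := Real.mul_self_sqrt (by positivity)
    calc (4:ℝ)^n * (∑ j, ∑ k, |T i j k|)
        = (2:ℝ)^n * ∑ j, ((2:ℝ)^n * ∑ k, |T i j k|) := by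
          rw [← Finset.mul_sum, show (4:ℝ) = 2*2 by norm_num, mul_pow]
          ring
      _ ≤ (2:ℝ)^n * ∑ j, (Real.sqrt (2*n) * Lsum (fun k => T i j k)) := by
          apply mul_le_mul_of_nonneg_left (Finset.sum_le_sum (fun j _ => hk1 j)) (by positivity)
      _ = Real.sqrt (2*n) * ((2:ℝ)^n * ∑ j, Lsum (fun k => T i j k)) := by
          rw [← Finset.mul_sum]; ring
      _ = Real.sqrt (2*n) * ((2:ℝ)^n * ∑ b : Fin n → Bool, ∑ j, |∑ k, sg b k * T i j k|) := by
          rw [e1]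
      _ = Real.sqrt (2*n) * ∑ b : Fin n → Bool, ((2:ℝ)^n * ∑ j, |∑ k, sg b k * T i j k|) := by
          rw [← Finset.mul_sum]
      _ ≤ Real.sqrt (2*n) * ∑ b : Fin n → Bool,
            (Real.sqrt (2*n) * Lsum (fun j => ∑ k, sg b k * T i j k)) := by
          apply mul_le_mul_of_nonneg_left (Finset.sum_le_sum (fun b _ => hk2 b))
            (Real.sqrt_nonneg _)
      _ = (2*n) * ∑ b : Fin n → Bool, Lsum (fun j => ∑ k, sg b k * T i j k) := by
          rw [← Finset.mul_sum, ← mul_assoc, hs]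
      _ = (2*n) * ∑ b : Fin n → Bool, ∑ b' : Fin n → Bool,
            |∑ j, sg b' j * (∑ k, sg b k * T i j k)| := by
          rw [Finset.sum_congr rfl (fun b _ => e2 b)]
  -- sum over i
  have h6 : (4:ℝ)^n * (∑ i, ∑ j, ∑ k, |T i j k|)
      ≤ (2*n) * ((4:ℝ)^n * v) := by
    calc (4:ℝ)^n * (∑ i, ∑ j, ∑ k, |T i j k|)
        = ∑ i, (4:ℝ)^n * (∑ j, ∑ k, |T i j k|) := by rw [← Finset.mul_sum]
      _ ≤ ∑ i, (2*n) * ∑ b : Fin n → Bool, ∑ b' : Fin n → Bool,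
            |∑ j, sg b' j * (∑ k, sg b k * T i j k)| :=
          Finset.sum_le_sum (fun i _ => hkey i)
      _ = (2*n) * ∑ i, ∑ b : Fin n → Bool, ∑ b' : Fin n → Bool,
            |∑ j, sg b' j * (∑ k, sg b k * T i j k)| := by rw [← Finset.mul_sum]
      _ = (2*n) * ∑ b : Fin n → Bool, ∑ b' : Fin n → Bool, ∑ i,
            |∑ j, sg b' j * (∑ k, sg b k * T i j k)| := by
          congr 1
          rw [Finset.sum_comm]
          apply Finset.sum_congr rfl; intro b _
          rw [Finset.sum_comm]
      _ ≤ (2*n) * ((4:ℝ)^n * v) := by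
          apply mul_le_mul_of_nonneg_left h2 (by positivity)
  have h7 : (4:ℝ)^n * (∑ i, ∑ j, ∑ k, |T i j k|) ≤ (4:ℝ)^n * ((2*n) * v) := by
    calc (4:ℝ)^n * (∑ i, ∑ j, ∑ k, |T i j k|) ≤ (2*n) * ((4:ℝ)^n * v) := h6
      _ = (4:ℝ)^n * ((2*n) * v) := by ring
  exact le_of_mul_le_mul_left h7 (by positivity)

end dualcore

section main

variable (n : ℕ) (p q r : ℝ≥0∞)

/-- scaled sign generators -/
noncomputable def genS : Finset (Fin n → ℝ) :=
  Finset.univ.image (fun b : Fin n → Bool =>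
    fun i => (((n:ℝ) ^ (((1:ℝ≥0∞)/p).toReal))⁻¹ * sg b i))

/-- basis generators -/
noncomputable def genB : Finset (Fin n → ℝ) :=
  Finset.univ.image (fun i0 : Fin n => fun j => if j = i0 then (1:ℝ) else 0)

noncomputable def SF : Finset (Fin n → Fin n → Fin n → ℝ) :=
  (((genS n p ∪ genB n) ×ˢ ((genS n q ∪ genB n) ×ˢ (genS n r))).image
    (fun w => fun i j k => w.1 i * w.2.1 j * w.2.2 k))

variable {n p q r}

lemma kp_pos (hn : 1 ≤ n) : 0 < (n:ℝ) ^ (((1:ℝ≥0∞)/p).toReal) := by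
  have : (0:ℝ) < n := by exact_mod_cast hn
  positivity

lemma pnorm_smul_gen (hn : 1 ≤ n) (hp : 1 ≤ p) {x : Fin n → ℝ}
    (hx : x ∈ genS n p ∪ genB n) {c : ℝ} (hc : 0 ≤ c) :
    pnorm p (fun i => c * x i) = c := by
  rcases Finset.mem_union.mp hx with h | h
  · obtain ⟨b, _, rfl⟩ := Finset.mem_image.mp h
    set κ := (n:ℝ) ^ (((1:ℝ≥0∞)/p).toReal) with hκ
    have hκpos : 0 < κ := kp_pos hn
    have habs : ∀ i, |c * (κ⁻¹ * sg b i)| = c * κ⁻¹ := by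
      intro i
      rw [abs_mul, abs_mul, abs_of_nonneg hc, abs_of_nonneg (le_of_lt (inv_pos.mpr hκpos))]
      have : |sg b i| = 1 := by unfold sg; split <;> norm_num
      rw [this, mul_one]
    rw [pnorm_const_abs hn hp (by positivity) habs]
    rw [← hκ]
    field_simp
  · obtain ⟨i0, _, rfl⟩ := Finset.mem_image.mp h
    have : (fun i => c * (if i = i0 then (1:ℝ) else 0)) = (fun i => if i = i0 then c else 0) := by
      funext i; split <;> ring
    rw [this, pnorm_single hn hp i0 hc]

lemma genS_sub_union : genS n p ⊆ genS n p ∪ genB n := Finset.subset_union_left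

lemma hull_le_ball (hn : 1 ≤ n) (hp : 1 ≤ p) (hq : 1 ≤ q) (hr : 1 ≤ r) :
    ∀ A ∈ convexHull ℝ (↑(SF n p q r) : Set (Fin n → Fin n → Fin n → ℝ)),
      projNorm3 p q r A ≤ 1 := by
  intro A hA
  rw [Finset.convexHull_eq] at hA
  obtain ⟨w, hw0, hw1, hwA⟩ := hA
  rw [Finset.centerMass_eq_of_sum_1 _ id hw1] at hwA
  classical
  -- choice of generator triples
  have hch : ∀ v ∈ SF n p q r, ∃ g : (Fin n → ℝ) × ((Fin n → ℝ) × (Fin n → ℝ)),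
      g.1 ∈ genS n p ∪ genB n ∧ g.2.1 ∈ genS n q ∪ genB n ∧ g.2.2 ∈ genS n r ∧
      v = fun i j k => g.1 i * g.2.1 j * g.2.2 k := by
    intro v hv
    obtain ⟨g, hg, hveq⟩ := Finset.mem_image.mp hv
    rw [Finset.mem_product] at hg
    obtain ⟨hg1, hg2⟩ := hg
    rw [Finset.mem_product] at hg2
    exact ⟨g, hg1, hg2.1, hg2.2, hveq.symm⟩
  set m := (SF n p q r).card with hm
  set e := (SF n p q r).equivFin.symm with he
  have hgdef : ∀ s : Fin m, _ := fun s => hch (e s).1 (e s).2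
  set G := fun s : Fin m => (hch (e s).1 (e s).2).choose with hG
  have hGspec := fun s : Fin m => (hch (e s).1 (e s).2).choose_spec
  set x := fun s : Fin m => (fun i => w (e s).1 * (G s).1 i) with hx
  set y := fun s : Fin m => (G s).2.1 with hy
  set z := fun s : Fin m => (G s).2.2 with hz
  have hid : ∀ i j k, A i j k = ∑ s : Fin m, x s i * y s j * z s k := by
    intro i j k
    have h1 : A i j k = ∑ v ∈ SF n p q r, w v * v i j k := by
      rw [← hwA]
      rw [Finset.sum_apply, Finset.sum_apply, Finset.sum_apply]
      · rfl
    rw [h1]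
    rw [← Finset.sum_attach (SF n p q r) (fun v => w v * v i j k), ← Finset.univ_eq_attach]
    rw [← Equiv.sum_comp e (fun v : {v // v ∈ SF n p q r} => w v.1 * (v.1 : _) i j k)]
    apply Finset.sum_congr rfl
    intro s _
    have hv := (hGspec s).2.2.2
    rw [hx, hy, hz]
    simp only []
    rw [hv]
    ring
  have hcost : (1:ℝ) = ∑ s : Fin m, pnorm p (x s) * pnorm q (y s) * pnorm r (z s) := by
    have hterm : ∀ s : Fin m,
        pnorm p (x s) * pnorm q (y s) * pnorm r (z s) = w (e s).1 := by
      intro s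
      have h1 : pnorm p (x s) = w (e s).1 :=
        pnorm_smul_gen hn hp (hGspec s).1 (hw0 _ (e s).2)
      have h2 : pnorm q (y s) = 1 := by
        have := pnorm_smul_gen hn hq (hGspec s).2.1 (zero_le_one (α := ℝ))
        simp only [one_mul] at this
        exact this
      have h3 : pnorm r (z s) = 1 := by
        have := pnorm_smul_gen hn hr (genS_sub_union (hGspec s).2.2.1)
          (zero_le_one (α := ℝ))
        simp only [one_mul] at this
        exact this
      rw [h1, h2, h3, mul_one, mul_one]
    rw [Finset.sum_congr rfl (fun s _ => hterm s)]
    rw [← hw1, ← Finset.sum_attach (SF n p q r) w, ← Finset.univ_eq_attach]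
    exact (Equiv.sum_comp e (fun v : {v // v ∈ SF n p q r} => w v.1)).symm
  unfold projNorm3
  apply csInf_le
  · refine ⟨0, fun t ht => ?_⟩
    obtain ⟨m', x', y', z', _, rfl⟩ := ht
    apply Finset.sum_nonneg
    intro s _
    have := pnorm_nonneg (p := p) (x' s)
    have := pnorm_nonneg (p := q) (y' s)
    have := pnorm_nonneg (p := r) (z' s)
    positivity
  · exact ⟨m, x, y, z, hid, hcost⟩

end main

section dualassembly

variable {n : ℕ} {p q r : ℝ≥0∞}

lemma scale_ineq {κ S u : ℝ} (hκ : 0 < κ) (h : κ⁻¹ * S ≤ u) : S ≤ κ * u := by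
  have h2 := mul_le_mul_of_nonneg_left h (le_of_lt hκ)
  rwa [← mul_assoc, mul_inv_cancel₀ (ne_of_gt hκ), one_mul] at h2

lemma mem_genS (b : Fin n → Bool) :
    (fun i => (((n:ℝ) ^ (((1:ℝ≥0∞)/p).toReal))⁻¹ * sg b i)) ∈ genS n p :=
  Finset.mem_image.mpr ⟨b, Finset.mem_univ b, rfl⟩

lemma mem_genB (i0 : Fin n) :
    (fun j => if j = i0 then (1:ℝ) else 0) ∈ genB n :=
  Finset.mem_image.mpr ⟨i0, Finset.mem_univ i0, rfl⟩

lemma dual_bound (hn : 1 ≤ n) (hp : 1 ≤ p) (hq : 1 ≤ q) (hr : 1 ≤ r)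
    (B : Fin n → Fin n → Fin n → ℝ) (u : ℝ) (hu : 0 ≤ u)
    (H : ∀ x ∈ genS n p ∪ genB n, ∀ y ∈ genS n q ∪ genB n, ∀ z ∈ genS n r,
      ∑ i, ∑ j, ∑ k, (x i * y j * z k) * B i j k ≤ u) :
    ∑ i, ∑ j, ∑ k, |B i j k| ≤
      2 * (n:ℝ) ^ (min ((1/p).toReal) (1/2:ℝ) + min ((1/q).toReal) (1/2:ℝ)
        + ((1/r).toReal) + 1) * u := by
  classical
  have hn0 : (0:ℝ) < n := by exact_mod_cast hn
  set ap := ((1:ℝ≥0∞)/p).toReal with hap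
  set aq := ((1:ℝ≥0∞)/q).toReal with haq
  set ar := ((1:ℝ≥0∞)/r).toReal with har
  have hap0 : 0 ≤ ap := ENNReal.toReal_nonneg
  have haq0 : 0 ≤ aq := ENNReal.toReal_nonneg
  have har0 : 0 ≤ ar := ENNReal.toReal_nonneg
  set κp := (n:ℝ) ^ ap with hκp
  set κq := (n:ℝ) ^ aq with hκq
  set κr := (n:ℝ) ^ ar with hκr
  have hκp0 : 0 < κp := Real.rpow_pos_of_pos hn0 _
  have hκq0 : 0 < κq := Real.rpow_pos_of_pos hn0 _
  have hκr0 : 0 < κr := Real.rpow_pos_of_pos hn0 _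
  -- specialized inequalities
  have Hbbs : ∀ (i0 j0 : Fin n) (b : Fin n → Bool),
      ∑ k, sg b k * B i0 j0 k ≤ κr * u := by
    intro i0 j0 b
    have h0 := H _ (Finset.mem_union_right _ (mem_genB i0)) _
      (Finset.mem_union_right _ (mem_genB j0)) _ (mem_genS b)
    have hcol : ∑ i, ∑ j, ∑ k, ((if i = i0 then (1:ℝ) else 0) * (if j = j0 then (1:ℝ) else 0)
        * (κr⁻¹ * sg b k)) * B i j k = κr⁻¹ * ∑ k, sg b k * B i0 j0 k := by
      simp only [ite_mul, mul_ite, one_mul, zero_mul, mul_zero, Finset.sum_ite_eq',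
        Finset.mem_univ, if_true, Finset.sum_ite_irrel, Finset.sum_const_zero,
        Finset.mul_sum]
      exact Finset.sum_congr rfl (fun k _ => by ring)
    rw [hcol] at h0
    exact scale_ineq hκr0 h0
  have Hbss : ∀ (i0 : Fin n) (b b' : Fin n → Bool),
      ∑ j, ∑ k, (sg b j * sg b' k) * B i0 j k ≤ κq * κr * u := by
    intro i0 b b'
    have h0 := H _ (Finset.mem_union_right _ (mem_genB i0)) _
      (Finset.mem_union_left _ (mem_genS b)) _ (mem_genS b')
    have hcol : ∑ i, ∑ j, ∑ k, ((if i = i0 then (1:ℝ) else 0) * (κq⁻¹ * sg b j)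
        * (κr⁻¹ * sg b' k)) * B i j k
        = (κq*κr)⁻¹ * ∑ j, ∑ k, (sg b j * sg b' k) * B i0 j k := by
      simp only [ite_mul, mul_ite, one_mul, zero_mul, mul_zero, Finset.sum_ite_eq',
        Finset.mem_univ, if_true, Finset.sum_ite_irrel, Finset.sum_const_zero,
        Finset.mul_sum]
      exact Finset.sum_congr rfl (fun j _ => Finset.sum_congr rfl (fun k _ => by ring))
    rw [hcol] at h0
    exact scale_ineq (by positivity) h0
  have Hsbs : ∀ (j0 : Fin n) (b b' : Fin n → Bool),
      ∑ i, ∑ k, (sg b i * sg b' k) * B i j0 k ≤ κp * κr * u := by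
    intro j0 b b'
    have h0 := H _ (Finset.mem_union_left _ (mem_genS b)) _
      (Finset.mem_union_right _ (mem_genB j0)) _ (mem_genS b')
    have hcol : ∑ i, ∑ j, ∑ k, ((κp⁻¹ * sg b i) * (if j = j0 then (1:ℝ) else 0)
        * (κr⁻¹ * sg b' k)) * B i j k
        = (κp*κr)⁻¹ * ∑ i, ∑ k, (sg b i * sg b' k) * B i j0 k := by
      simp only [ite_mul, mul_ite, one_mul, zero_mul, mul_zero, Finset.sum_ite_eq',
        Finset.mem_univ, if_true, Finset.sum_ite_irrel, Finset.sum_const_zero,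
        Finset.mul_sum]
      exact Finset.sum_congr rfl (fun i _ => Finset.sum_congr rfl (fun k _ => by ring))
    rw [hcol] at h0
    exact scale_ineq (by positivity) h0
  have Hsss : ∀ (b b' b'' : Fin n → Bool),
      ∑ i, ∑ j, ∑ k, (sg b i * sg b' j * sg b'' k) * B i j k ≤ κp * κq * κr * u := by
    intro b b' b''
    have h0 := H _ (Finset.mem_union_left _ (mem_genS b)) _
      (Finset.mem_union_left _ (mem_genS b')) _ (mem_genS b'')
    have hcol : ∑ i, ∑ j, ∑ k, ((κp⁻¹ * sg b i) * (κq⁻¹ * sg b' j)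
        * (κr⁻¹ * sg b'' k)) * B i j k
        = (κp*κq*κr)⁻¹ * ∑ i, ∑ j, ∑ k, (sg b i * sg b' j * sg b'' k) * B i j k := by
      simp only [Finset.mul_sum]
      exact Finset.sum_congr rfl (fun i _ => Finset.sum_congr rfl (fun j _ =>
        Finset.sum_congr rfl (fun k _ => by ring)))
    rw [hcol] at h0
    exact scale_ineq (by positivity) h0
  -- case split
  by_cases hP : (1/2:ℝ) ≤ ap <;> by_cases hQ : (1/2:ℝ) ≤ aq
  · -- both basis
    have hbd := caseA_bound B (fun i0 j0 b => Hbbs i0 j0 b)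
    have hα : min ap (1/2:ℝ) + min aq (1/2:ℝ) + ar + 1 = 2 + ar := by
      rw [min_eq_right hP, min_eq_right hQ]; ring
    rw [hα]
    have hpow : (n:ℝ) ^ ((2:ℝ) + ar) = (n:ℝ)^(2:ℕ) * κr := by
      rw [Real.rpow_add hn0, hκr]
      congr 1
      rw [← Real.rpow_natCast (n:ℝ) 2]
      norm_num
    rw [hpow]
    calc ∑ i, ∑ j, ∑ k, |B i j k| ≤ (n:ℝ)^2 * (κr * u) := hbd
      _ ≤ 2 * ((n:ℝ)^(2:ℕ) * κr) * u := by nlinarith [mul_nonneg (mul_nonneg (le_of_lt (pow_pos hn0 2)) (le_of_lt hκr0)) hu]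
  · -- p basis, q sign
    have hbd : ∀ i0 : Fin n, ∑ j, ∑ k, |B i0 j k| ≤ Real.sqrt (2*n) * (κq*κr*u) :=
      fun i0 => slice_bound hn _ (fun b b' => Hbss i0 b b')
    have htot : ∑ i, ∑ j, ∑ k, |B i j k| ≤ (n:ℝ) * (Real.sqrt (2*n) * (κq*κr*u)) := by
      calc ∑ i, ∑ j, ∑ k, |B i j k| ≤ ∑ _i : Fin n, Real.sqrt (2*n) * (κq*κr*u) :=
            Finset.sum_le_sum (fun i _ => hbd i)
        _ = (n:ℝ) * (Real.sqrt (2*n) * (κq*κr*u)) := by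
            rw [Finset.sum_const]; simp [Finset.card_univ]
    have hα : min ap (1/2:ℝ) + min aq (1/2:ℝ) + ar + 1 = 1 + (1/2:ℝ) + aq + ar := by
      rw [min_eq_right hP, min_eq_left (le_of_not_ge hQ)]; ring
    rw [hα]
    have hpow : (n:ℝ) ^ ((1:ℝ) + (1/2:ℝ) + aq + ar) = (n:ℝ) * Real.sqrt n * (κq * κr) := by
      rw [Real.rpow_add hn0, Real.rpow_add hn0, Real.rpow_add hn0, Real.rpow_one]
      rw [← Real.sqrt_eq_rpow]
      ring
    rw [hpow]
    have hsqrt : Real.sqrt (2*n) ≤ 2 * Real.sqrt n := by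
      rw [show (2:ℝ) * Real.sqrt n = Real.sqrt 4 * Real.sqrt n by
        rw [show (4:ℝ) = 2^2 by norm_num, Real.sqrt_sq (by norm_num : (0:ℝ) ≤ 2)]]
      rw [← Real.sqrt_mul (by norm_num : (0:ℝ) ≤ 4)]
      apply Real.sqrt_le_sqrt; linarith
    calc ∑ i, ∑ j, ∑ k, |B i j k| ≤ (n:ℝ) * (Real.sqrt (2*n) * (κq*κr*u)) := htot
      _ ≤ (n:ℝ) * ((2 * Real.sqrt n) * (κq*κr*u)) := by
          apply mul_le_mul_of_nonneg_left _ (le_of_lt hn0)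
          apply mul_le_mul_of_nonneg_right hsqrt
          positivity
      _ = 2 * ((n:ℝ) * Real.sqrt n * (κq * κr)) * u := by ring
  · -- p sign, q basis
    have hbd : ∀ j0 : Fin n, ∑ i, ∑ k, |B i j0 k| ≤ Real.sqrt (2*n) * (κp*κr*u) :=
      fun j0 => slice_bound hn _ (fun b b' => Hsbs j0 b b')
    have htot : ∑ i, ∑ j, ∑ k, |B i j k| ≤ (n:ℝ) * (Real.sqrt (2*n) * (κp*κr*u)) := by
      have hsw : ∑ i, ∑ j, ∑ k, |B i j k| = ∑ j, ∑ i, ∑ k, |B i j k| := Finset.sum_comm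
      rw [hsw]
      calc ∑ j, ∑ i, ∑ k, |B i j k| ≤ ∑ _j : Fin n, Real.sqrt (2*n) * (κp*κr*u) :=
            Finset.sum_le_sum (fun j _ => hbd j)
        _ = (n:ℝ) * (Real.sqrt (2*n) * (κp*κr*u)) := by
            rw [Finset.sum_const]; simp [Finset.card_univ]
    have hα : min ap (1/2:ℝ) + min aq (1/2:ℝ) + ar + 1 = 1 + (1/2:ℝ) + ap + ar := by
      rw [min_eq_left (le_of_not_ge hP), min_eq_right hQ]; ring
    rw [hα]
    have hpow : (n:ℝ) ^ ((1:ℝ) + (1/2:ℝ) + ap + ar) = (n:ℝ) * Real.sqrt n * (κp * κr) := by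
      rw [Real.rpow_add hn0, Real.rpow_add hn0, Real.rpow_add hn0, Real.rpow_one]
      rw [← Real.sqrt_eq_rpow]
      ring
    rw [hpow]
    have hsqrt : Real.sqrt (2*n) ≤ 2 * Real.sqrt n := by
      rw [show (2:ℝ) * Real.sqrt n = Real.sqrt 4 * Real.sqrt n by
        rw [show (4:ℝ) = 2^2 by norm_num, Real.sqrt_sq (by norm_num : (0:ℝ) ≤ 2)]]
      rw [← Real.sqrt_mul (by norm_num : (0:ℝ) ≤ 4)]
      apply Real.sqrt_le_sqrt; linarith
    calc ∑ i, ∑ j, ∑ k, |B i j k| ≤ (n:ℝ) * (Real.sqrt (2*n) * (κp*κr*u)) := htot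
      _ ≤ (n:ℝ) * ((2 * Real.sqrt n) * (κp*κr*u)) := by
          apply mul_le_mul_of_nonneg_left _ (le_of_lt hn0)
          apply mul_le_mul_of_nonneg_right hsqrt
          positivity
      _ = 2 * ((n:ℝ) * Real.sqrt n * (κp * κr)) * u := by ring
  · -- both sign
    have hbd := cube_bound hn B (fun b b' b'' => Hsss b'' b' b)
    have hα : min ap (1/2:ℝ) + min aq (1/2:ℝ) + ar + 1 = 1 + ap + aq + ar := by
      rw [min_eq_left (le_of_not_ge hP), min_eq_left (le_of_not_ge hQ)]; ring
    rw [hα]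
    have hpow : (n:ℝ) ^ ((1:ℝ) + ap + aq + ar) = (n:ℝ) * (κp * κq * κr) := by
      rw [Real.rpow_add hn0, Real.rpow_add hn0, Real.rpow_add hn0, Real.rpow_one]
      ring
    rw [hpow]
    calc ∑ i, ∑ j, ∑ k, |B i j k| ≤ 2 * n * (κp*κq*κr*u) := hbd
      _ = 2 * ((n:ℝ) * (κp * κq * κr)) * u := by ring

end dualassembly

section separation

variable {n : ℕ} {p q r : ℝ≥0∞}

noncomputable def Etens (n : ℕ) (i0 j0 k0 : Fin n) : Fin n → Fin n → Fin n → ℝ :=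
  fun i j k => if i = i0 then (if j = j0 then (if k = k0 then (1:ℝ) else 0) else 0) else 0

lemma tensor_expansion (A : Fin n → Fin n → Fin n → ℝ) :
    A = ∑ i0, ∑ j0, ∑ k0, A i0 j0 k0 • Etens n i0 j0 k0 := by
  funext i j k
  rw [Finset.sum_apply, Finset.sum_apply, Finset.sum_apply]
  simp only [Finset.sum_apply, Pi.smul_apply, Etens, smul_eq_mul]
  rw [Finset.sum_eq_single i (fun i0 _ hi0 => by
      apply Finset.sum_eq_zero; intro j0 _; apply Finset.sum_eq_zero; intro k0 _
      rw [if_neg (Ne.symm hi0)]; ring)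
    (fun h => absurd (Finset.mem_univ i) h)]
  rw [Finset.sum_eq_single j (fun j0 _ hj0 => by
      apply Finset.sum_eq_zero; intro k0 _
      rw [if_pos rfl, if_neg (Ne.symm hj0)]; ring)
    (fun h => absurd (Finset.mem_univ j) h)]
  rw [Finset.sum_eq_single k (fun k0 _ hk0 => by
      rw [if_pos rfl, if_pos rfl, if_neg (Ne.symm hk0)]; ring)
    (fun h => absurd (Finset.mem_univ k) h)]
  simp

lemma clm_repr (f : (Fin n → Fin n → Fin n → ℝ) →L[ℝ] ℝ) (A : Fin n → Fin n → Fin n → ℝ) :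
    f A = ∑ i, ∑ j, ∑ k, A i j k * f (Etens n i j k) := by
  conv_lhs => rw [tensor_expansion A]
  rw [map_sum]
  apply Finset.sum_congr rfl; intro i _
  rw [map_sum]
  apply Finset.sum_congr rfl; intro j _
  rw [map_sum]
  apply Finset.sum_congr rfl; intro k _
  rw [_root_.map_smul, smul_eq_mul]

lemma cube_in_hull (hn : 1 ≤ n) (hp : 1 ≤ p) (hq : 1 ≤ q) (hr : 1 ≤ r)
    (A : Fin n → Fin n → Fin n → ℝ)
    (hA : ∀ i j k, |A i j k| ≤ (2 * (n:ℝ) ^ (min ((1/p).toReal) (1/2:ℝ)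
      + min ((1/q).toReal) (1/2:ℝ) + ((1/r).toReal) + 1))⁻¹) :
    A ∈ convexHull ℝ (↑(SF n p q r) : Set (Fin n → Fin n → Fin n → ℝ)) := by
  classical
  have hn0 : (0:ℝ) < n := by exact_mod_cast hn
  set α := min ((1/p).toReal) (1/2:ℝ) + min ((1/q).toReal) (1/2:ℝ)
      + ((1/r).toReal) + 1 with hα
  have hpow0 : (0:ℝ) < (n:ℝ) ^ α := Real.rpow_pos_of_pos hn0 _
  by_contra hmem
  obtain ⟨f, u, hf, hfA⟩ := geometric_hahn_banach_closed_point
    (convex_convexHull ℝ _) ((SF n p q r).finite_toSet.isCompact_convexHull ℝ).isClosed hmem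
  set B := fun i j k => f (Etens n i j k) with hB
  -- membership of generator tensors in the hull
  have htens_mem : ∀ x ∈ genS n p ∪ genB n, ∀ y ∈ genS n q ∪ genB n, ∀ z ∈ genS n r,
      (fun i j k => x i * y j * z k) ∈ SF n p q r := by
    intro x hx y hy z hz
    apply Finset.mem_image.mpr
    exact ⟨(x, y, z), by
      rw [Finset.mem_product]
      exact ⟨hx, by rw [Finset.mem_product]; exact ⟨hy, hz⟩⟩, rfl⟩
  -- 0 is in the hull
  have hzero_mem : (0 : Fin n → Fin n → Fin n → ℝ) ∈
      convexHull ℝ (↑(SF n p q r) : Set (Fin n → Fin n → Fin n → ℝ)) := by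
    set x₀ : Fin n → ℝ := fun i => (((n:ℝ) ^ (((1:ℝ≥0∞)/p).toReal))⁻¹ * sg (fun _ => false) i)
    set y₀ : Fin n → ℝ := fun j => (((n:ℝ) ^ (((1:ℝ≥0∞)/q).toReal))⁻¹ * sg (fun _ => false) j)
    set z₀ : Fin n → ℝ := fun k => (((n:ℝ) ^ (((1:ℝ≥0∞)/r).toReal))⁻¹ * sg (fun _ => false) k)
    set z₁ : Fin n → ℝ := fun k => (((n:ℝ) ^ (((1:ℝ≥0∞)/r).toReal))⁻¹ * sg (fun _ => true) k)
    have hv0 : (fun i j k => x₀ i * y₀ j * z₀ k) ∈ SF n p q r :=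
      htens_mem _ (Finset.mem_union_left _ (mem_genS _)) _
        (Finset.mem_union_left _ (mem_genS _)) _ (mem_genS _)
    have hv1 : (fun i j k => x₀ i * y₀ j * z₁ k) ∈ SF n p q r :=
      htens_mem _ (Finset.mem_union_left _ (mem_genS _)) _
        (Finset.mem_union_left _ (mem_genS _)) _ (mem_genS _)
    have hmid := (convex_convexHull ℝ (↑(SF n p q r) : Set (Fin n → Fin n → Fin n → ℝ)))
      (subset_convexHull ℝ _ hv0) (subset_convexHull ℝ _ hv1)
      (by norm_num : (0:ℝ) ≤ 1/2) (by norm_num : (0:ℝ) ≤ 1/2) (by norm_num)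
    have : ((1:ℝ)/2) • (fun i j k => x₀ i * y₀ j * z₀ k)
        + ((1:ℝ)/2) • (fun i j k => x₀ i * y₀ j * z₁ k)
        = (0 : Fin n → Fin n → Fin n → ℝ) := by
      funext i j k
      simp only [Pi.add_apply, Pi.smul_apply, smul_eq_mul, Pi.zero_apply]
      have hz01 : z₁ k = - z₀ k := by
        simp only [z₀, z₁, sg]
        norm_num
      rw [hz01]
      ring
    rw [this] at hmid
    exact hmid
  have hu : 0 < u := by
    have := hf 0 hzero_mem
    rwa [map_zero] at this
  -- dual hypothesis
  have H : ∀ x ∈ genS n p ∪ genB n, ∀ y ∈ genS n q ∪ genB n, ∀ z ∈ genS n r,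
      ∑ i, ∑ j, ∑ k, (x i * y j * z k) * B i j k ≤ u := by
    intro x hx y hy z hz
    have hmem' := subset_convexHull ℝ (↑(SF n p q r) : Set (Fin n → Fin n → Fin n → ℝ))
      (htens_mem x hx y hy z hz)
    have hlt := hf _ hmem'
    rw [clm_repr f] at hlt
    exact le_of_lt hlt
  have hdual := dual_bound hn hp hq hr B u (le_of_lt hu) H
  -- contradiction
  have hcontr : f A ≤ u := by
    rw [clm_repr f A]
    have hterm : ∀ (i j k : Fin n), A i j k * B i j k
        ≤ (2 * (n:ℝ)^α)⁻¹ * |B i j k| := by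
      intro i j k
      calc A i j k * B i j k ≤ |A i j k * B i j k| := le_abs_self _
        _ = |A i j k| * |B i j k| := abs_mul _ _
        _ ≤ (2 * (n:ℝ)^α)⁻¹ * |B i j k| :=
            mul_le_mul_of_nonneg_right (hA i j k) (abs_nonneg _)
    calc ∑ i, ∑ j, ∑ k, A i j k * B i j k
        ≤ ∑ i, ∑ j, ∑ k, (2 * (n:ℝ)^α)⁻¹ * |B i j k| := by
          apply Finset.sum_le_sum; intro i _
          apply Finset.sum_le_sum; intro j _
          exact Finset.sum_le_sum (fun k _ => hterm i j k)
      _ = (2 * (n:ℝ)^α)⁻¹ * ∑ i, ∑ j, ∑ k, |B i j k| := by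
          rw [Finset.mul_sum]
          apply Finset.sum_congr rfl; intro i _
          rw [Finset.mul_sum]
          apply Finset.sum_congr rfl; intro j _
          rw [Finset.mul_sum]
      _ ≤ (2 * (n:ℝ)^α)⁻¹ * (2 * (n:ℝ)^α * u) := by
          apply mul_le_mul_of_nonneg_left hdual
          positivity
      _ = u := by
          field_simp
  exact absurd hfA (not_lt.mpr hcontr)

end separation


end PTN

theorem stmt3 (n : ℕ) (p q r : ℝ≥0∞) (hp : 1 ≤ p) (hq : 1 ≤ q) (hr : 1 ≤ r) :
    (volume {A : Fin n → Fin n → Fin n → ℝ | projNorm3 p q r A ≤ 1}) ^ ((1 : ℝ) / n ^ 3) ≥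
      ENNReal.ofReal ((n : ℝ) ^
        (-min (1 / p).toReal (1 / 2) - min (1 / q).toReal (1 / 2) - (1 / r).toReal - 1)) := by
  rcases Nat.eq_zero_or_pos n with hn0 | hn
  · subst hn0
    have hexp : (-min ((1:ℝ≥0∞) / p).toReal (1 / 2) - min ((1:ℝ≥0∞) / q).toReal (1 / 2)
        - ((1:ℝ≥0∞) / r).toReal - 1) ≠ 0 := by
      have h1 : 0 ≤ min ((1:ℝ≥0∞) / p).toReal (1/2:ℝ) :=
        le_min ENNReal.toReal_nonneg (by norm_num)
      have h2 : 0 ≤ min ((1:ℝ≥0∞) / q).toReal (1/2:ℝ) :=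
        le_min ENNReal.toReal_nonneg (by norm_num)
      have h3 : (0:ℝ) ≤ ((1:ℝ≥0∞) / r).toReal := ENNReal.toReal_nonneg
      intro h
      linarith [h]
    rw [show ((0:ℕ):ℝ) = (0:ℝ) by norm_num, Real.zero_rpow hexp]
    simp
  · -- main case
    have hn1 : 1 ≤ n := hn
    have hnR : (0:ℝ) < n := by exact_mod_cast hn
    set α := min ((1:ℝ≥0∞) / p).toReal (1/2:ℝ) + min ((1:ℝ≥0∞) / q).toReal (1/2:ℝ)
        + ((1:ℝ≥0∞) / r).toReal + 1 with hα
    have hpowpos : (0:ℝ) < (n:ℝ) ^ α := Real.rpow_pos_of_pos hnR _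
    set ρ := (2 * (n:ℝ) ^ α)⁻¹ with hρ
    have hρ0 : 0 < ρ := by positivity
    set Cset : Set (Fin n → Fin n → Fin n → ℝ) :=
      Set.univ.pi (fun _ : Fin n => Set.univ.pi (fun _ : Fin n =>
        Set.univ.pi (fun _ : Fin n => Set.Icc (-ρ) ρ))) with hCset
    have hsub : Cset ⊆ {A : Fin n → Fin n → Fin n → ℝ | projNorm3 p q r A ≤ 1} := by
      intro A hA
      have habs : ∀ i j k, |A i j k| ≤ ρ := by
        intro i j k
        have h1 := hA i (Set.mem_univ i)
        have h2 := h1 j (Set.mem_univ j)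
        have h3 := h2 k (Set.mem_univ k)
        rw [Set.mem_Icc] at h3
        exact abs_le.mpr h3
      exact PTN.hull_le_ball hn1 hp hq hr A (PTN.cube_in_hull hn1 hp hq hr A habs)
    have hvol : volume Cset = (ENNReal.ofReal (2*ρ))^(n^3) := by
      rw [hCset, MeasureTheory.volume_pi_pi]
      simp_rw [MeasureTheory.volume_pi_pi, Real.volume_Icc]
      rw [Finset.prod_const, Finset.prod_const, Finset.prod_const]
      rw [Finset.card_univ, Fintype.card_fin]
      rw [← pow_mul, ← pow_mul]
      ring_nf
    rw [ge_iff_le]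
    have hee : (-min ((1:ℝ≥0∞) / p).toReal (1/2:ℝ) - min ((1:ℝ≥0∞) / q).toReal (1/2:ℝ)
        - ((1:ℝ≥0∞) / r).toReal - 1) = -α := by
      rw [hα]; ring
    calc ENNReal.ofReal ((n : ℝ) ^
          (-min ((1:ℝ≥0∞) / p).toReal (1/2:ℝ) - min ((1:ℝ≥0∞) / q).toReal (1/2:ℝ)
            - ((1:ℝ≥0∞) / r).toReal - 1))
        = ENNReal.ofReal (2*ρ) := by
          rw [hee, Real.rpow_neg (le_of_lt hnR)]
          congr 1
          rw [hρ]
          field_simp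
      _ = ((ENNReal.ofReal (2*ρ))^(n^3)) ^ ((1:ℝ) / (n:ℝ)^3) := by
          rw [← ENNReal.rpow_natCast (ENNReal.ofReal (2*ρ)) (n^3)]
          rw [← ENNReal.rpow_mul]
          rw [show ((n^3:ℕ):ℝ) * ((1:ℝ)/(n:ℝ)^3) = 1 by
            push_cast
            field_simp]
          rw [ENNReal.rpow_one]
      _ = (volume Cset) ^ ((1:ℝ) / (n:ℝ)^3) := by rw [hvol]
      _ ≤ (volume {A : Fin n → Fin n → Fin n → ℝ | projNorm3 p q r A ≤ 1})
            ^ ((1:ℝ) / (n:ℝ)^3) := by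
          apply ENNReal.rpow_le_rpow (measure_mono hsub)
          positivity
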